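/- Let $p/q$ be a positive rational in reduced form and write $p = p_1^2 + p_2^2 + p_3^2 + p_4^2$ with integers $p_j$. Then there exist integers $a, b, \gamma$ such that the quantity $\Delta = bA + 2(\gamma - a)B + (1 - b^2 + 4a\gamma)C$ is relatively prime to $q$, where $A = p_1^2 - p_2^2 + p_3^2 - p_4^2$, $B = p_1p_2 + p_3p_4$, $C = p_1p_4 - p_2p_3$. -/

import Mathlib

/-- Key lemma: with `b = 1`, `Δ = A + 2(γ-a)B + 4aγC` can be made coprime to any
positive `n` coprime to `p = p₁²+p₂²+p₃²+p₄²`. -/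
lemma key_abgamma (p₁ p₂ p₃ p₄ : ℤ) :
    ∀ n : ℕ, 0 < n → Nat.Coprime (p₁^2 + p₂^2 + p₃^2 + p₄^2).natAbs n →
    ∃ a γ : ℤ, IsCoprime ((p₁^2 - p₂^2 + p₃^2 - p₄^2) + 2*(γ - a)*(p₁*p₂ + p₃*p₄)
      + 4*a*γ*(p₁*p₄ - p₂*p₃)) (n : ℤ) := by
  set A : ℤ := p₁^2 - p₂^2 + p₃^2 - p₄^2 with hA
  set B : ℤ := p₁*p₂ + p₃*p₄ with hB
  set C : ℤ := p₁*p₄ - p₂*p₃ with hC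
  set P : ℤ := p₁^2 + p₂^2 + p₃^2 + p₄^2 with hP
  intro n
  induction n using Nat.recOnPosPrimePosCoprime with
  | zero => intro h; exact absurd h (lt_irrefl 0)
  | one =>
    intro _ _
    exact ⟨0, 0, by push_cast; exact isCoprime_one_right⟩
  | prime_pow r t hr ht =>
    intro _ hcop
    have hrn : r.Prime := hr
    -- r does not divide P
    have hcop' : Nat.Coprime P.natAbs r := by
      have := Nat.Coprime.coprime_dvd_right (dvd_pow_self r ht.ne') hcop
      exact this
    have hrP : ¬ ((r : ℤ) ∣ P) := by
      intro hdvd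
      have hd : r ∣ P.natAbs := by
        have := Int.natAbs_dvd_natAbs.mpr hdvd
        simpa using this
      exact (hrn.coprime_iff_not_dvd).mp hcop'.symm hd
    -- suffices to find a,γ with Δ not divisible by r
    suffices h : ∃ a γ : ℤ, ¬ ((r : ℤ) ∣ (A + 2*(γ - a)*B + 4*a*γ*C)) by
      obtain ⟨a, γ, hnd⟩ := h
      refine ⟨a, γ, ?_⟩
      have hprime : Prime (r : ℤ) := Nat.prime_iff_prime_int.mp hrn
      have h1 : IsCoprime (A + 2*(γ - a)*B + 4*a*γ*C) ((r : ℤ)) :=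
        ((hprime.coprime_iff_not_dvd).mpr hnd).symm
      have := h1.pow_right (n := t)
      rwa [show ((r:ℤ))^t = ((r^t : ℕ) : ℤ) by push_cast; ring] at this
    -- work in ZMod r
    haveI : Fact r.Prime := ⟨hrn⟩
    have hPz : ((P : ℤ) : ZMod r) ≠ 0 := by
      rwa [Ne, ZMod.intCast_zmod_eq_zero_iff_dvd]
    by_cases hAz : ((A : ℤ) : ZMod r) = 0
    · -- r ∣ A; then r is odd
      have h2 : ((2 : ℤ) : ZMod r) ≠ 0 := by
        rw [Ne, ZMod.intCast_zmod_eq_zero_iff_dvd]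
        intro h2d
        have hr2 : r = 2 := (Nat.prime_dvd_prime_iff_eq hrn Nat.prime_two).mp
          (by exact_mod_cast Int.ofNat_dvd.mp (by exact_mod_cast h2d))
        apply hPz
        have hdA : (r : ℤ) ∣ A := (ZMod.intCast_zmod_eq_zero_iff_dvd _ _).mp hAz
        rw [ZMod.intCast_zmod_eq_zero_iff_dvd]
        have : P = A + 2 * (p₂^2 + p₄^2) := by rw [hA, hP]; ring
        rw [this, hr2] at *
        exact dvd_add hdA ⟨(p₂^2 + p₄^2), by push_cast; ring⟩
      by_cases hBz : ((B : ℤ) : ZMod r) = 0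
      · -- A ≡ B ≡ 0 : then C ≢ 0; take a = γ = 1
        refine ⟨1, 1, ?_⟩
        rw [← ZMod.intCast_zmod_eq_zero_iff_dvd] at *
        intro hcontra
        -- hcontra : cast of (A + 2*(1-1)*B + 4*1*1*C) = 0, so cast C = 0
        have hCz : ((C : ℤ) : ZMod r) = 0 := by
          have h4 : ((4 : ℤ) : ZMod r) ≠ 0 := by
            have : ((4 : ℤ) : ZMod r) = ((2:ℤ) : ZMod r) * ((2:ℤ) : ZMod r) := by
              push_cast; ring
            rw [this]
            exact mul_ne_zero h2 h2
          have : ((4 : ℤ) : ZMod r) * ((C : ℤ) : ZMod r) = 0 := by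
            have : ((A + 2*(1 - 1)*B + 4*1*1*C : ℤ) : ZMod r)
                = ((A : ℤ) : ZMod r) + ((4:ℤ) : ZMod r) * ((C : ℤ) : ZMod r) := by
              push_cast; ring
            rw [this, hAz, zero_add] at hcontra
            exact hcontra
          exact (mul_eq_zero.mp this).resolve_left h4
        -- now derive contradiction: P ≡ 0
        apply hPz
        set u : ℤ := p₁^2 + p₃^2 with hu
        set v : ℤ := p₂^2 + p₄^2 with hv
        have huv : ((u : ℤ) : ZMod r) * ((v : ℤ) : ZMod r)
            = ((B : ℤ) : ZMod r)^2 + ((C : ℤ) : ZMod r)^2 := by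
          have : u * v = B^2 + C^2 := by rw [hu, hv, hB, hC]; ring
          calc ((u : ℤ) : ZMod r) * ((v : ℤ) : ZMod r) = ((u*v : ℤ) : ZMod r) := by push_cast; ring
            _ = ((B^2 + C^2 : ℤ) : ZMod r) := by rw [this]
            _ = _ := by push_cast; ring
        have hueqv : ((u : ℤ) : ZMod r) = ((v : ℤ) : ZMod r) := by
          have : ((A : ℤ) : ZMod r) = ((u : ℤ) : ZMod r) - ((v : ℤ) : ZMod r) := by
            rw [hA, hu, hv]; push_cast; ring
          rw [this] at hAz
          exact sub_eq_zero.mp hAz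
        have husq : ((u : ℤ) : ZMod r) * ((u : ℤ) : ZMod r) = 0 := by
          rw [hueqv] at huv ⊢
          rw [huv, hBz, hCz]; ring
        have hu0 : ((u : ℤ) : ZMod r) = 0 := by
          rcases mul_eq_zero.mp husq with h | h <;> exact h
        have : ((P : ℤ) : ZMod r) = ((u : ℤ) : ZMod r) + ((v : ℤ) : ZMod r) := by
          rw [hP, hu, hv]; push_cast; ring
        rw [this, ← hueqv, hu0, add_zero]
      · -- B ≢ 0 : take a = 0, γ = 1
        refine ⟨0, 1, ?_⟩
        rw [← ZMod.intCast_zmod_eq_zero_iff_dvd]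
        intro hcontra
        have : ((A + 2*(1 - 0)*B + 4*0*1*C : ℤ) : ZMod r)
            = ((A : ℤ) : ZMod r) + ((2:ℤ) : ZMod r) * ((B : ℤ) : ZMod r) := by
          push_cast; ring
        rw [this, hAz, zero_add] at hcontra
        exact (mul_ne_zero h2 hBz) hcontra
    · -- A ≢ 0 : take a = γ = 0
      refine ⟨0, 0, ?_⟩
      rw [← ZMod.intCast_zmod_eq_zero_iff_dvd]
      intro hcontra
      apply hAz
      have : ((A + 2*(0 - 0)*B + 4*0*0*C : ℤ) : ZMod r) = ((A : ℤ) : ZMod r) := by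
        push_cast; ring
      rw [this] at hcontra
      exact hcontra
  | coprime m k hm hk hmk ihm ihk =>
    intro _ hcop
    have hmpos : 0 < m := lt_trans one_pos hm
    have hkpos : 0 < k := lt_trans one_pos hk
    obtain ⟨a₁, γ₁, h1⟩ := ihm hmpos (Nat.Coprime.coprime_dvd_right ⟨k, rfl⟩ hcop)
    obtain ⟨a₂, γ₂, h2⟩ := ihk hkpos (Nat.Coprime.coprime_dvd_right ⟨m, mul_comm m k⟩ hcop)
    obtain ⟨x, y, hxy⟩ := Nat.isCoprime_iff_coprime.mpr hmk
    set a₀ : ℤ := a₁ * y * k + a₂ * x * m with ha₀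
    set γ₀ : ℤ := γ₁ * y * k + γ₂ * x * m with hγ₀
    refine ⟨a₀, γ₀, ?_⟩
    have hfm : IsCoprime (A + 2*(γ₀ - a₀)*B + 4*a₀*γ₀*C) ((m : ℤ)) := by
      have heq : A + 2*(γ₀ - a₀)*B + 4*a₀*γ₀*C
          = (A + 2*(γ₁ - a₁)*B + 4*a₁*γ₁*C)
            + (m : ℤ) * (2*((γ₂ - γ₁)*x)*B - 2*((a₂ - a₁)*x)*B
              + 4*C*(a₀*((γ₂ - γ₁)*x) + γ₁*((a₂ - a₁)*x))) := by
        have hda : a₀ - a₁ = (a₂ - a₁) * x * m := by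
          rw [ha₀]; linear_combination a₁ * hxy
        have hdg : γ₀ - γ₁ = (γ₂ - γ₁) * x * m := by
          rw [hγ₀]; linear_combination γ₁ * hxy
        linear_combination (2*B + 4*C*a₀) * hdg + (-2*B + 4*C*γ₁) * hda
      rw [heq]
      exact h1.add_mul_left_left _
    have hfk : IsCoprime (A + 2*(γ₀ - a₀)*B + 4*a₀*γ₀*C) ((k : ℤ)) := by
      have heq : A + 2*(γ₀ - a₀)*B + 4*a₀*γ₀*C
          = (A + 2*(γ₂ - a₂)*B + 4*a₂*γ₂*C)
            + (k : ℤ) * (2*((γ₁ - γ₂)*y)*B - 2*((a₁ - a₂)*y)*B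
              + 4*C*(a₀*((γ₁ - γ₂)*y) + γ₂*((a₁ - a₂)*y))) := by
        have hda : a₀ - a₂ = (a₁ - a₂) * y * k := by
          rw [ha₀]; linear_combination a₂ * hxy
        have hdg : γ₀ - γ₂ = (γ₁ - γ₂) * y * k := by
          rw [hγ₀]; linear_combination γ₂ * hxy
        linear_combination (2*B + 4*C*a₀) * hdg + (-2*B + 4*C*γ₂) * hda
      rw [heq]
      exact h2.add_mul_left_left _
    have := hfm.mul_right hfk
    rwa [show ((m*k : ℕ) : ℤ) = (m:ℤ)*(k:ℤ) by push_cast; ring]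

theorem exists_abgamma_coprime (p q : ℤ) (hp : 0 < p) (hq : 0 < q)
    (hpq : Int.gcd p q = 1) (p₁ p₂ p₃ p₄ : ℤ)
    (hsum : p = p₁^2 + p₂^2 + p₃^2 + p₄^2) :
    ∃ a b γ : ℤ,
      Int.gcd (b * (p₁^2 - p₂^2 + p₃^2 - p₄^2) + 2*(γ - a)*(p₁*p₂ + p₃*p₄)
        + (1 - b^2 + 4*a*γ)*(p₁*p₄ - p₂*p₃)) q = 1 := by
  have hn : 0 < q.natAbs := Int.natAbs_pos.mpr hq.ne'
  have hcop : Nat.Coprime (p₁^2 + p₂^2 + p₃^2 + p₄^2).natAbs q.natAbs := by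
    rw [← hsum]; exact hpq
  obtain ⟨a, γ, h⟩ := key_abgamma p₁ p₂ p₃ p₄ q.natAbs hn hcop
  refine ⟨a, 1, γ, ?_⟩
  rw [Int.natAbs_of_nonneg hq.le] at h
  have heq : 1 * (p₁^2 - p₂^2 + p₃^2 - p₄^2) + 2*(γ - a)*(p₁*p₂ + p₃*p₄)
      + (1 - 1^2 + 4*a*γ)*(p₁*p₄ - p₂*p₃)
      = (p₁^2 - p₂^2 + p₃^2 - p₄^2) + 2*(γ - a)*(p₁*p₂ + p₃*p₄)
        + 4*a*γ*(p₁*p₄ - p₂*p₃) := by ring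
  rw [heq]
  exact Int.isCoprime_iff_gcd_eq_one.mp h
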